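/- Let X ∈ ℝ^{n×n} be symmetric with eigenvalues λ₁ ≤ λ₂ ≤ ⋯ ≤ λ_n, and let 1 ≤ k ≤ n. Then λ₁ + ⋯ + λ_k equals the minimum of tr(XY) over all symmetric matrices Y satisfying 0 ⪯ Y ⪯ I_n and tr(Y) = k. -/

import Mathlib

open Matrix Finset

private lemma psd_diag_nonneg {n : ℕ} {Z : Matrix (Fin n) (Fin n) ℝ} (hZ : Z.PosSemidef)
    (i : Fin n) : 0 ≤ Z i i := by
  exact hZ.diag_nonneg

private lemma card_filter_lt' {n k : ℕ} (hkn : k ≤ n) :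
    (Finset.univ.filter (fun i : Fin n => (i : ℕ) < k)).card = k := by
  have h : ∀ m ∈ Finset.range k, m < n := fun m hm =>
    lt_of_lt_of_le (Finset.mem_range.mp hm) hkn
  have he : Finset.univ.filter (fun i : Fin n => (i : ℕ) < k) = (Finset.range k).attachFin h := by
    ext i; simp [Finset.mem_attachFin]
  rw [he, Finset.card_attachFin, Finset.card_range]

private lemma key_ineq {n k : ℕ} (hk1 : 1 ≤ k) (hkn : k ≤ n) (ev w : Fin n → ℝ)
    (hmono : Monotone ev) (hw0 : ∀ i, 0 ≤ w i) (hw1 : ∀ i, w i ≤ 1)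
    (hsum : ∑ i, w i = (k : ℝ)) :
    ∑ i ∈ Finset.univ.filter (fun i : Fin n => (i : ℕ) < k), ev i ≤ ∑ i, ev i * w i := by
  have hkn' : k - 1 < n := lt_of_lt_of_le (Nat.sub_lt hk1 one_pos) hkn
  set c := ev ⟨k - 1, hkn'⟩ with hc
  set A := Finset.univ.filter (fun i : Fin n => (i : ℕ) < k) with hAdef
  set B := Finset.univ.filter (fun i : Fin n => ¬ (i : ℕ) < k) with hBdef
  have hA : ∀ i ∈ A, ev i ≤ c := by
    intro i hi
    apply hmono
    rw [Fin.le_def]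
    have : (i : ℕ) < k := by simpa [hAdef] using hi
    simp only []
    omega
  have hB : ∀ i ∈ B, c ≤ ev i := by
    intro i hi
    apply hmono
    rw [Fin.le_def]
    have : ¬ (i : ℕ) < k := by simpa [hBdef] using hi
    simp only []
    omega
  have hsplit := Finset.sum_filter_add_sum_filter_not Finset.univ
    (fun i : Fin n => (i : ℕ) < k) (fun i => ev i * w i)
  have hsum2 := Finset.sum_filter_add_sum_filter_not Finset.univ
    (fun i : Fin n => (i : ℕ) < k) w
  have hcard : (A.card : ℝ) = (k : ℝ) := by rw [hAdef, card_filter_lt' hkn]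
  have h1 : ∑ i ∈ A, (ev i + c * (w i - 1)) ≤ ∑ i ∈ A, ev i * w i := by
    apply Finset.sum_le_sum
    intro i hi
    have h := mul_le_mul_of_nonpos_right (hA i hi) (by linarith [hw1 i] : w i - 1 ≤ 0)
    nlinarith [h]
  have h2 : ∑ i ∈ B, c * w i ≤ ∑ i ∈ B, ev i * w i := by
    apply Finset.sum_le_sum
    intro i hi
    exact mul_le_mul_of_nonneg_right (hB i hi) (hw0 i)
  have e1 : ∑ i ∈ A, (ev i + c * (w i - 1))
      = (∑ i ∈ A, ev i) + c * ((∑ i ∈ A, w i) - k) := by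
    rw [Finset.sum_add_distrib, ← Finset.mul_sum, Finset.sum_sub_distrib, Finset.sum_const,
      nsmul_eq_mul, mul_one, hcard]
  have e2 : ∑ i ∈ B, c * w i = c * ∑ i ∈ B, w i := by rw [Finset.mul_sum]
  have hz : c * ((∑ i ∈ A, w i) - k) + c * (∑ i ∈ B, w i) = 0 := by
    have hAB : (∑ i ∈ A, w i) + (∑ i ∈ B, w i) = (k : ℝ) := by
      rw [← hsum]; exact hsum2
    have he : c * ((∑ i ∈ A, w i) - k) + c * (∑ i ∈ B, w i)
        = c * (((∑ i ∈ A, w i) + (∑ i ∈ B, w i)) - k) := by ring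
    rw [he, hAB]; ring
  rw [← hsplit]
  linarith [h1, h2, e1.symm.le, e2.symm.le]

theorem stmt_5 {n k : ℕ} (hk1 : 1 ≤ k) (hkn : k ≤ n)
    (X : Matrix (Fin n) (Fin n) ℝ) (hX : X.IsHermitian)
    (ev : Fin n → ℝ) (hmono : Monotone ev)
    (hev : ∃ σ : Equiv.Perm (Fin n), ev = hX.eigenvalues ∘ σ) :
    IsLeast {t : ℝ | ∃ Y : Matrix (Fin n) (Fin n) ℝ,
        Y.PosSemidef ∧ ((1 : Matrix (Fin n) (Fin n) ℝ) - Y).PosSemidef ∧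
        Y.trace = (k : ℝ) ∧ t = (X * Y).trace}
      (∑ i ∈ Finset.univ.filter (fun i : Fin n => (i : ℕ) < k), ev i) := by
  obtain ⟨σ, hσ⟩ := hev
  set U : Matrix (Fin n) (Fin n) ℝ := (hX.eigenvectorUnitary : Matrix (Fin n) (Fin n) ℝ) with hU
  have hU1 : U * Uᴴ = 1 := by
    have := (Matrix.mem_unitaryGroup_iff).mp hX.eigenvectorUnitary.2
    rwa [Matrix.star_eq_conjTranspose] at this
  have hU2 : Uᴴ * U = 1 := by
    have := (Matrix.mem_unitaryGroup_iff').mp hX.eigenvectorUnitary.2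
    rwa [Matrix.star_eq_conjTranspose] at this
  have hspec : X = U * Matrix.diagonal hX.eigenvalues * Uᴴ := by
    have h := hX.spectral_theorem
    rw [RCLike.ofReal_real_eq_id, Function.id_comp, Unitary.conjStarAlgAut_apply, Matrix.star_eq_conjTranspose] at h
    exact h
  constructor
  · -- membership: the optimal Y
    set w : Fin n → ℝ := fun i => if ((σ.symm i : Fin n) : ℕ) < k then 1 else 0 with hwdef
    have hw0 : ∀ i, 0 ≤ w i := by intro i; simp only [hwdef]; split <;> norm_num
    have hw1 : ∀ i, w i ≤ 1 := by intro i; simp only [hwdef]; split <;> norm_num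
    refine ⟨U * Matrix.diagonal w * Uᴴ, ?_, ?_, ?_, ?_⟩
    · exact (Matrix.PosSemidef.diagonal hw0).mul_mul_conjTranspose_same U
    · have he : (1 : Matrix (Fin n) (Fin n) ℝ) - U * Matrix.diagonal w * Uᴴ
          = U * Matrix.diagonal (fun i => 1 - w i) * Uᴴ := by
        have : Matrix.diagonal (fun i => 1 - w i)
            = (1 : Matrix (Fin n) (Fin n) ℝ) - Matrix.diagonal w := by
          rw [← Matrix.diagonal_one, Matrix.diagonal_sub]
        rw [this, Matrix.mul_sub, Matrix.sub_mul, Matrix.mul_one, hU1]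
      rw [he]
      refine (Matrix.PosSemidef.diagonal ?_).mul_mul_conjTranspose_same U
      intro i
      show (0 : ℝ) ≤ 1 - w i
      linarith [hw1 i]
    · rw [Matrix.trace_mul_cycle, hU2, one_mul, Matrix.trace_diagonal]
      have h : ∑ i, w i = ∑ j : Fin n, (if (j : ℕ) < k then (1 : ℝ) else 0) := by
        rw [← Equiv.sum_comp σ.symm (fun j : Fin n => if (j : ℕ) < k then (1 : ℝ) else 0)]
      rw [h, Finset.sum_boole, card_filter_lt' hkn]
    · have hm : X * (U * Matrix.diagonal w * Uᴴ)
          = U * (Matrix.diagonal hX.eigenvalues * Matrix.diagonal w) * Uᴴ := by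
        conv_lhs => rw [hspec]
        simp only [Matrix.mul_assoc]
        rw [← Matrix.mul_assoc Uᴴ U, hU2, one_mul]
      rw [hm, Matrix.trace_mul_cycle, hU2, one_mul, Matrix.diagonal_mul_diagonal, Matrix.trace_diagonal]
      have : ∑ i, hX.eigenvalues i * w i
          = ∑ j, hX.eigenvalues (σ j) * w (σ j) := by
        rw [Equiv.sum_comp σ (fun i => hX.eigenvalues i * w i)]
      rw [this]
      have hws : ∀ j : Fin n, w (σ j) = if (j : ℕ) < k then (1 : ℝ) else 0 := by
        intro j; simp [hwdef]
      rw [Finset.sum_filter]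
      apply Finset.sum_congr rfl
      intro j _
      rw [hσ, hws j]
      simp only [Function.comp_apply]
      split <;> ring
  · -- lower bound
    rintro t ⟨Y, hY, hIY, htr, rfl⟩
    set Z := Uᴴ * Y * U with hZdef
    have hZ : Z.PosSemidef := hY.conjTranspose_mul_mul_same U
    have hIZ : ((1 : Matrix (Fin n) (Fin n) ℝ) - Z).PosSemidef := by
      have he : (1 : Matrix (Fin n) (Fin n) ℝ) - Z
          = Uᴴ * ((1 : Matrix (Fin n) (Fin n) ℝ) - Y) * U := by
        rw [hZdef, Matrix.mul_sub, Matrix.sub_mul, Matrix.mul_one, hU2]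
      rw [he]
      exact hIY.conjTranspose_mul_mul_same U
    have htrZ : Z.trace = (k : ℝ) := by
      rw [hZdef, Matrix.trace_mul_cycle, hU1, one_mul, htr]
    have hXY : (X * Y).trace = (Matrix.diagonal hX.eigenvalues * Z).trace := by
      have hm : Matrix.diagonal hX.eigenvalues * Z = Uᴴ * (X * Y) * U := by
        conv_rhs => rw [hspec]
        rw [hZdef]
        simp only [Matrix.mul_assoc]
        rw [← Matrix.mul_assoc Uᴴ U, hU2, one_mul]
      rw [hm, Matrix.trace_mul_cycle, hU1, one_mul]
    have htr2 : (Matrix.diagonal hX.eigenvalues * Z).trace = ∑ i, hX.eigenvalues i * Z i i := by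
      simp [Matrix.trace, Matrix.diag, Matrix.diagonal_mul]
    set w : Fin n → ℝ := fun j => Z (σ j) (σ j) with hwdef
    have hw0 : ∀ j, 0 ≤ w j := fun j => psd_diag_nonneg hZ (σ j)
    have hw1 : ∀ j, w j ≤ 1 := by
      intro j
      have h := psd_diag_nonneg hIZ (σ j)
      simp only [Matrix.sub_apply, Matrix.one_apply_eq] at h
      simp only [hwdef]
      linarith
    have hsumw : ∑ j, w j = (k : ℝ) := by
      have : ∑ j, w j = ∑ i, Z i i := Equiv.sum_comp σ (fun i => Z i i)
      rw [this, ← htrZ]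
      simp [Matrix.trace, Matrix.diag]
    have hkey := key_ineq hk1 hkn ev w hmono hw0 hw1 hsumw
    have hfin : ∑ j, ev j * w j = ∑ i, hX.eigenvalues i * Z i i := by
      rw [← Equiv.sum_comp σ (fun i => hX.eigenvalues i * Z i i)]
      apply Finset.sum_congr rfl
      intro j _
      rw [hσ]; rfl
    rw [hXY, htr2, ← hfin]
    exact hkey
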